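/- Let W, W̃ ∈ ℂ^{n×n} with W̃ a min ε-approximation of W for ε ∈ (0,1). Let F ⊆ [n] be such that I_{|F|} − W_{FF} and I_{|F|} − W̃_{FF} are invertible, and let C = [n] \ F. Then I_{|C|} − Sc(I_n − W̃, C) is a min ε-approximation of I_{|C|} − Sc(I_n − W, C) (with no loss in the approximation parameter). -/

import Mathlib

open Matrix

noncomputable section

/-- The sesquilinear form `x* A y`. -/
def sesq {m : Type*} [Fintype m] (A : Matrix m m ℂ) (x y : m → ℂ) : ℂ :=
  star x ⬝ᵥ (A *ᵥ y)

/-- The symmetrization `U_A = (A + A*)/2` of a complex square matrix. -/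
def csym {m : Type*} [Fintype m] (A : Matrix m m ℂ) : Matrix m m ℂ :=
  (1 / 2 : ℂ) • (A + Aᴴ)

/-- `W̃` is a *min ε-approximation* of `W`: for all `x, y`,
`|x*(W − W̃)y| ≤ (ε/2)·min{x*U_{I−W}x + y*U_{I−W̃}y, y*U_{I−W}y + x*U_{I−W̃}x}`. -/
def MinApprox {m : Type*} [Fintype m] [DecidableEq m] (ε : ℝ)
    (W Wt : Matrix m m ℂ) : Prop :=
  ∀ x y : m → ℂ,
    ‖sesq (W - Wt) x y‖ ≤
      ε / 2 *
        min ((sesq (csym (1 - W)) x x).re + (sesq (csym (1 - Wt)) y y).re)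
          ((sesq (csym (1 - W)) y y).re + (sesq (csym (1 - Wt)) x x).re)

/-- The Schur complement `Sc(M, C) = M_CC − M_CF M_FF⁻¹ M_FC` of `M` onto the
set `C = {i | ¬ p i}`, where `F = {i | p i}`. -/
def schurC {n : ℕ} (M : Matrix (Fin n) (Fin n) ℂ) (p : Fin n → Prop)
    [DecidablePred p] : Matrix {i : Fin n // ¬ p i} {i : Fin n // ¬ p i} ℂ :=
  M.submatrix (fun i : {i : Fin n // ¬ p i} => i.1) (fun j : {j : Fin n // ¬ p j} => j.1) -
    M.submatrix (fun i : {i : Fin n // ¬ p i} => i.1) (fun j : {j : Fin n // p j} => j.1) *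
      (M.submatrix (fun i : {i : Fin n // p i} => i.1) (fun j : {j : Fin n // p j} => j.1))⁻¹ *
      M.submatrix (fun i : {i : Fin n // p i} => i.1) (fun j : {j : Fin n // ¬ p j} => j.1)

section aux
variable {n : ℕ} (p : Fin n → Prop) [DecidablePred p]

/-- Extend vectors defined on `F` and on `C` to a vector on `Fin n`. -/
def extv (f : {i : Fin n // p i} → ℂ) (x : {i : Fin n // ¬ p i} → ℂ) : Fin n → ℂ :=
  fun i => if h : p i then f ⟨i, h⟩ else x ⟨i, h⟩

lemma extv_F (f : {i : Fin n // p i} → ℂ) (x : {i : Fin n // ¬ p i} → ℂ)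
    (i : {i : Fin n // p i}) : extv p f x i.1 = f i := by simp [extv, i.2]

lemma extv_C (f : {i : Fin n // p i} → ℂ) (x : {i : Fin n // ¬ p i} → ℂ)
    (i : {i : Fin n // ¬ p i}) : extv p f x i.1 = x i := by simp [extv, i.2]

lemma dot_split (u v : Fin n → ℂ) :
    u ⬝ᵥ v = (fun i : {i : Fin n // p i} => u i.1) ⬝ᵥ (fun i : {i : Fin n // p i} => v i.1)
      + (fun i : {i : Fin n // ¬ p i} => u i.1) ⬝ᵥ (fun i : {i : Fin n // ¬ p i} => v i.1) := by
  simp only [dotProduct]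
  exact (Fintype.sum_subtype_add_sum_subtype p fun i => u i * v i).symm

variable (M : Matrix (Fin n) (Fin n) ℂ)

lemma mulVec_split (z : Fin n → ℂ) (i : Fin n) :
    (M *ᵥ z) i =
      (M.submatrix id (fun j : {j : Fin n // p j} => j.1) *ᵥ fun j : {j : Fin n // p j} => z j.1) i
      + (M.submatrix id (fun j : {j : Fin n // ¬ p j} => j.1) *ᵥ
          fun j : {j : Fin n // ¬ p j} => z j.1) i := by
  simpa [Matrix.mulVec, Matrix.submatrix] using dot_split p (fun j => M i j) z

/-- The harmonic extension of `y : C → ℂ` with respect to `M`. -/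
def hExt (y : {i : Fin n // ¬ p i} → ℂ) : Fin n → ℂ :=
  extv p (-((M.submatrix (fun i : {i : Fin n // p i} => i.1)
        (fun j : {j : Fin n // p j} => j.1))⁻¹ *ᵥ
      (M.submatrix (fun i : {i : Fin n // p i} => i.1)
        (fun j : {j : Fin n // ¬ p j} => j.1) *ᵥ y))) y

lemma hExt_C (y : {i : Fin n // ¬ p i} → ℂ) (i : {i : Fin n // ¬ p i}) :
    hExt p M y i.1 = y i := extv_C p _ _ i

lemma mulVec_hExt_F
    (hM : IsUnit (M.submatrix (fun i : {i : Fin n // p i} => i.1)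
      (fun j : {j : Fin n // p j} => j.1)))
    (y : {i : Fin n // ¬ p i} → ℂ) (i : {i : Fin n // p i}) :
    (M *ᵥ hExt p M y) i.1 = 0 := by
  set A := M.submatrix (fun i : {i : Fin n // p i} => i.1) (fun j : {j : Fin n // p j} => j.1)
  set B := M.submatrix (fun i : {i : Fin n // p i} => i.1) (fun j : {j : Fin n // ¬ p j} => j.1)
  have h1 : (fun j : {j : Fin n // p j} => hExt p M y j.1) = -(A⁻¹ *ᵥ (B *ᵥ y)) := by
    funext j; exact extv_F p _ _ j
  have h2 : (fun j : {j : Fin n // ¬ p j} => hExt p M y j.1) = y := by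
    funext j; exact extv_C p _ _ j
  rw [mulVec_split p M, h1, h2]
  have hAA : A * A⁻¹ = 1 := Matrix.mul_nonsing_inv A ((Matrix.isUnit_iff_isUnit_det A).mp hM)
  have e1 : (M.submatrix id (fun j : {j : Fin n // p j} => j.1) *ᵥ (-(A⁻¹ *ᵥ (B *ᵥ y)))) i.1
      = (A *ᵥ (-(A⁻¹ *ᵥ (B *ᵥ y)))) i := by
    simp [Matrix.mulVec, Matrix.submatrix, A]
  rw [e1]
  have e2 : (M.submatrix id (fun j : {j : Fin n // ¬ p j} => j.1) *ᵥ y) i.1 = (B *ᵥ y) i := by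
    simp [Matrix.mulVec, Matrix.submatrix, B]
  rw [e2, Matrix.mulVec_neg, Matrix.mulVec_mulVec, hAA]
  simp

lemma mulVec_hExt_C (y : {i : Fin n // ¬ p i} → ℂ) (i : {i : Fin n // ¬ p i}) :
    (M *ᵥ hExt p M y) i.1 = (schurC M p *ᵥ y) i := by
  set A := M.submatrix (fun i : {i : Fin n // p i} => i.1) (fun j : {j : Fin n // p j} => j.1)
  set B := M.submatrix (fun i : {i : Fin n // p i} => i.1) (fun j : {j : Fin n // ¬ p j} => j.1)
  set Cm := M.submatrix (fun i : {i : Fin n // ¬ p i} => i.1) (fun j : {j : Fin n // p j} => j.1)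
  set D := M.submatrix (fun i : {i : Fin n // ¬ p i} => i.1) (fun j : {j : Fin n // ¬ p j} => j.1)
  have h1 : (fun j : {j : Fin n // p j} => hExt p M y j.1) = -(A⁻¹ *ᵥ (B *ᵥ y)) := by
    funext j; exact extv_F p _ _ j
  have h2 : (fun j : {j : Fin n // ¬ p j} => hExt p M y j.1) = y := by
    funext j; exact extv_C p _ _ j
  rw [mulVec_split p M, h1, h2]
  have e1 : (M.submatrix id (fun j : {j : Fin n // p j} => j.1) *ᵥ (-(A⁻¹ *ᵥ (B *ᵥ y)))) i.1
      = (Cm *ᵥ (-(A⁻¹ *ᵥ (B *ᵥ y)))) i := by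
    simp [Matrix.mulVec, Matrix.submatrix, Cm]
  have e2 : (M.submatrix id (fun j : {j : Fin n // ¬ p j} => j.1) *ᵥ y) i.1 = (D *ᵥ y) i := by
    simp [Matrix.mulVec, Matrix.submatrix, D]
  rw [e1, e2]
  have hS : schurC M p = D - Cm * A⁻¹ * B := rfl
  rw [hS]
  simp [Matrix.sub_mulVec, Matrix.mulVec_neg, Matrix.mulVec_mulVec, Matrix.mul_assoc]
  ring

lemma adj_dot {m : Type*} [Fintype m] (N : Matrix m m ℂ) (u z : m → ℂ) :
    star u ⬝ᵥ (N *ᵥ z) = star (Nᴴ *ᵥ u) ⬝ᵥ z := by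
  rw [Matrix.dotProduct_mulVec, Matrix.star_mulVec, Matrix.conjTranspose_conjTranspose]

lemma sesq_sub {m : Type*} [Fintype m] (A B : Matrix m m ℂ) (x y : m → ℂ) :
    sesq (A - B) x y = sesq A x y - sesq B x y := by
  simp [sesq, Matrix.sub_mulVec, dotProduct_sub]

lemma sesq_conjTranspose {m : Type*} [Fintype m] (A : Matrix m m ℂ) (z : m → ℂ) :
    sesq Aᴴ z z = (starRingEnd ℂ) (sesq A z z) := by
  unfold sesq
  rw [adj_dot, Matrix.conjTranspose_conjTranspose]
  simp [dotProduct, map_sum, mul_comm]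

lemma csym_re {m : Type*} [Fintype m] (A : Matrix m m ℂ) (z : m → ℂ) :
    (sesq (csym A) z z).re = (sesq A z z).re := by
  have h : sesq (csym A) z z = (1/2 : ℂ) * (sesq A z z + sesq Aᴴ z z) := by
    simp [sesq, csym, Matrix.add_mulVec, Matrix.smul_mulVec, dotProduct_add,
      dotProduct_smul, smul_eq_mul, mul_add]
  rw [h, sesq_conjTranspose]
  set s := sesq A z z
  simp [Complex.mul_re, Complex.add_re, Complex.add_im]
  ring

lemma schurC_conjTranspose (N : Matrix (Fin n) (Fin n) ℂ) :
    (schurC Nᴴ p)ᴴ = schurC N p := by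
  simp [schurC, Matrix.conjTranspose_sub, Matrix.conjTranspose_mul,
    Matrix.conjTranspose_submatrix, Matrix.conjTranspose_nonsing_inv, Matrix.mul_assoc]

lemma pairA (hM : IsUnit (M.submatrix (fun i : {i : Fin n // p i} => i.1)
      (fun j : {j : Fin n // p j} => j.1)))
    (u : Fin n → ℂ) (y : {i : Fin n // ¬ p i} → ℂ) :
    star u ⬝ᵥ (M *ᵥ hExt p M y) =
      sesq (schurC M p) (fun i : {i : Fin n // ¬ p i} => u i.1) y := by
  rw [dot_split p]
  have hF : (fun i : {i : Fin n // p i} => (M *ᵥ hExt p M y) i.1) = 0 := by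
    funext i; exact mulVec_hExt_F p M hM y i
  have hC : (fun i : {i : Fin n // ¬ p i} => (M *ᵥ hExt p M y) i.1) = schurC M p *ᵥ y := by
    funext i; exact mulVec_hExt_C p M y i
  rw [hF, hC]
  simp [sesq, dotProduct]

lemma pairB (hM : IsUnit (M.submatrix (fun i : {i : Fin n // p i} => i.1)
      (fun j : {j : Fin n // p j} => j.1)))
    (x : {i : Fin n // ¬ p i} → ℂ) (z : Fin n → ℂ) :
    star (hExt p Mᴴ x) ⬝ᵥ (M *ᵥ z) =
      sesq (schurC M p) x (fun i : {i : Fin n // ¬ p i} => z i.1) := by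
  have hM' : IsUnit (Mᴴ.submatrix (fun i : {i : Fin n // p i} => i.1)
      (fun j : {j : Fin n // p j} => j.1)) := by
    rw [← Matrix.conjTranspose_submatrix, Matrix.isUnit_conjTranspose]
    exact hM
  rw [adj_dot, dot_split p]
  have e0 : (fun i : {i : Fin n // p i} => (star (Mᴴ *ᵥ hExt p Mᴴ x)) i.1)
      ⬝ᵥ (fun i : {i : Fin n // p i} => z i.1) = 0 := by
    have h1 : (fun i : {i : Fin n // p i} => (star (Mᴴ *ᵥ hExt p Mᴴ x)) i.1)
        = fun i : {i : Fin n // p i} => star ((Mᴴ *ᵥ hExt p Mᴴ x) i.1) := by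
      funext i; simp
    rw [h1]
    have h2 : (fun i : {i : Fin n // p i} => star ((Mᴴ *ᵥ hExt p Mᴴ x) i.1))
        = fun _ => (0 : ℂ) := by
      funext i; rw [mulVec_hExt_F p Mᴴ hM' x i]; simp
    rw [h2]; simp [dotProduct]
  rw [e0, zero_add]
  have e1 : (fun i : {i : Fin n // ¬ p i} => (star (Mᴴ *ᵥ hExt p Mᴴ x)) i.1)
      = star (schurC Mᴴ p *ᵥ x) := by
    funext i
    simp only [Pi.star_apply]
    rw [mulVec_hExt_C p Mᴴ x i]
  rw [e1]
  have h3 := adj_dot (schurC Mᴴ p)ᴴ x (fun i : {i : Fin n // ¬ p i} => z i.1)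
  rw [Matrix.conjTranspose_conjTranspose] at h3
  rw [← h3, schurC_conjTranspose]
  rfl

end aux

/-- Min ε-approximation (`ε ∈ (0,1)`) is preserved exactly by
Schur complements: if `W̃` is a min ε-approximation of `W` and `I − W_FF`,
`I − W̃_FF` are invertible, then `I − Sc(I − W̃, C)` is a min ε-approximation of
`I − Sc(I − W, C)`. -/
theorem schur_preserves_min_approx {n : ℕ} (ε : ℝ) (h0 : 0 < ε) (h1 : ε < 1)
    (W Wt : Matrix (Fin n) (Fin n) ℂ) (p : Fin n → Prop) [DecidablePred p]
    (hW : IsUnit ((1 : Matrix {i : Fin n // p i} {i : Fin n // p i} ℂ) -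
      W.submatrix (fun i : {i : Fin n // p i} => i.1) (fun j : {j : Fin n // p j} => j.1)))
    (hWt : IsUnit ((1 : Matrix {i : Fin n // p i} {i : Fin n // p i} ℂ) -
      Wt.submatrix (fun i : {i : Fin n // p i} => i.1) (fun j : {j : Fin n // p j} => j.1)))
    (h : MinApprox ε W Wt) :
    MinApprox ε (1 - schurC (1 - W) p) (1 - schurC (1 - Wt) p) := by
  intro x y
  set M : Matrix (Fin n) (Fin n) ℂ := 1 - W with hMdef
  set Mt : Matrix (Fin n) (Fin n) ℂ := 1 - Wt with hMtdef
  -- invertibility of the F-blocks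
  have hsubM : M.submatrix (fun i : {i : Fin n // p i} => i.1)
      (fun j : {j : Fin n // p j} => j.1) =
      1 - W.submatrix (fun i : {i : Fin n // p i} => i.1) (fun j : {j : Fin n // p j} => j.1) := by
    ext i j
    simp [hMdef, Matrix.submatrix_apply, Matrix.sub_apply, Matrix.one_apply,
      Subtype.ext_iff]
  have hsubMt : Mt.submatrix (fun i : {i : Fin n // p i} => i.1)
      (fun j : {j : Fin n // p j} => j.1) =
      1 - Wt.submatrix (fun i : {i : Fin n // p i} => i.1)
        (fun j : {j : Fin n // p j} => j.1) := by
    ext i j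
    simp [hMtdef, Matrix.submatrix_apply, Matrix.sub_apply, Matrix.one_apply,
      Subtype.ext_iff]
  have hMF : IsUnit (M.submatrix (fun i : {i : Fin n // p i} => i.1)
      (fun j : {j : Fin n // p j} => j.1)) := by rw [hsubM]; exact hW
  have hMtF : IsUnit (Mt.submatrix (fun i : {i : Fin n // p i} => i.1)
      (fun j : {j : Fin n // p j} => j.1)) := by rw [hsubMt]; exact hWt
  -- the four extensions
  have hxhC : (fun i : {i : Fin n // ¬ p i} => hExt p Mᴴ x i.1) = x := by
    funext i; exact hExt_C p Mᴴ x i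
  have hytC : (fun i : {i : Fin n // ¬ p i} => hExt p Mt y i.1) = y := by
    funext i; exact hExt_C p Mt y i
  have hxtC : (fun i : {i : Fin n // ¬ p i} => hExt p Mtᴴ x i.1) = x := by
    funext i; exact hExt_C p Mtᴴ x i
  have hyhC : (fun i : {i : Fin n // ¬ p i} => hExt p M y i.1) = y := by
    funext i; exact hExt_C p M y i
  have hWsub : W - Wt = Mt - M := by rw [hMdef, hMtdef]; abel
  -- identity 1
  have I1 : sesq (W - Wt) (hExt p Mᴴ x) (hExt p Mt y)
      = sesq (schurC Mt p) x y - sesq (schurC M p) x y := by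
    rw [hWsub, sesq_sub]
    have e1 : sesq Mt (hExt p Mᴴ x) (hExt p Mt y) = sesq (schurC Mt p) x y := by
      have h' := pairA p Mt hMtF (hExt p Mᴴ x) y
      rw [hxhC] at h'
      exact h'
    have e2 : sesq M (hExt p Mᴴ x) (hExt p Mt y) = sesq (schurC M p) x y := by
      have h' := pairB p M hMF x (hExt p Mt y)
      rw [hytC] at h'
      exact h'
    rw [e1, e2]
  -- identity 2
  have I2 : sesq (W - Wt) (hExt p Mtᴴ x) (hExt p M y)
      = sesq (schurC Mt p) x y - sesq (schurC M p) x y := by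
    rw [hWsub, sesq_sub]
    have e1 : sesq Mt (hExt p Mtᴴ x) (hExt p M y) = sesq (schurC Mt p) x y := by
      have h' := pairB p Mt hMtF x (hExt p M y)
      rw [hyhC] at h'
      exact h'
    have e2 : sesq M (hExt p Mtᴴ x) (hExt p M y) = sesq (schurC M p) x y := by
      have h' := pairA p M hMF (hExt p Mtᴴ x) y
      rw [hxtC] at h'
      exact h'
    rw [e1, e2]
  -- diagonal identities
  have d1 : sesq M (hExt p Mᴴ x) (hExt p Mᴴ x) = sesq (schurC M p) x x := by
    have h' := pairB p M hMF x (hExt p Mᴴ x)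
    rw [hxhC] at h'
    exact h'
  have d2 : sesq Mt (hExt p Mt y) (hExt p Mt y) = sesq (schurC Mt p) y y := by
    have h' := pairA p Mt hMtF (hExt p Mt y) y
    rw [hytC] at h'
    exact h'
  have d3 : sesq M (hExt p M y) (hExt p M y) = sesq (schurC M p) y y := by
    have h' := pairA p M hMF (hExt p M y) y
    rw [hyhC] at h'
    exact h'
  have d4 : sesq Mt (hExt p Mtᴴ x) (hExt p Mtᴴ x) = sesq (schurC Mt p) x x := by
    have h' := pairB p Mt hMtF x (hExt p Mtᴴ x)
    rw [hxtC] at h'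
    exact h'
  -- the two bounds
  have key1 : ‖sesq (schurC Mt p) x y - sesq (schurC M p) x y‖
      ≤ ε / 2 * ((sesq (schurC M p) x x).re + (sesq (schurC Mt p) y y).re) := by
    have h1 := h (hExt p Mᴴ x) (hExt p Mt y)
    rw [I1] at h1
    refine h1.trans (mul_le_mul_of_nonneg_left ?_ (by positivity : (0:ℝ) ≤ ε/2))
    refine (min_le_left _ _).trans ?_
    rw [csym_re, csym_re, d1, d2]
  have key2 : ‖sesq (schurC Mt p) x y - sesq (schurC M p) x y‖
      ≤ ε / 2 * ((sesq (schurC M p) y y).re + (sesq (schurC Mt p) x x).re) := by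
    have h1 := h (hExt p Mtᴴ x) (hExt p M y)
    rw [I2] at h1
    refine h1.trans (mul_le_mul_of_nonneg_left ?_ (by positivity : (0:ℝ) ≤ ε/2))
    refine (min_le_right _ _).trans ?_
    rw [csym_re, csym_re, d3, d4]
  -- assemble
  have hgoalM : (1 - schurC M p) - (1 - schurC Mt p) = schurC Mt p - schurC M p := by abel
  rw [hgoalM, sesq_sub]
  simp only [sub_sub_cancel, csym_re]
  rcases le_total ((sesq (schurC M p) x x).re + (sesq (schurC Mt p) y y).re)
      ((sesq (schurC M p) y y).re + (sesq (schurC Mt p) x x).re) with hab | hab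
  · rw [min_eq_left hab]; exact key1
  · rw [min_eq_right hab]; exact key2

end
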